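/- arXiv:1508.03971 — 2 statements merged into one kernel-verified Lean document; each statement's English description precedes it below -/
import Mathlib

section
/- Let G₁ and G₂ be finite nonempty simple graphs and let G = G₁ + G₂ be their join. If K(G) has at least 3 vertices (i.e., the product of the numbers of cliques of G₁ and of G₂ is at least 3), then the clique graph K(G) is Hamiltonian, i.e., it contains a cycle passing through every vertex exactly once. -/
open SimpleGraph

universe u v

/-- A clique (maximal complete subgraph) of `G`, viewed as a vertex set. -/
def IsMaxClique {V : Type u} (G : SimpleGraph V) (s : Set V) : Prop :=
  G.IsClique s ∧ ∀ t : Set V, G.IsClique t → s ⊆ t → s = t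

/-- The set of all cliques (maximal complete subgraphs) of `G`. -/
def maxCliques {V : Type u} (G : SimpleGraph V) : Set (Set V) :=
  {s | IsMaxClique G s}

/-- The clique graph `K(G)`: vertices are the cliques of `G`, two distinct cliques
being adjacent iff they intersect. -/
def cliqueGraph {V : Type u} (G : SimpleGraph V) : SimpleGraph ↥(maxCliques G) where
  Adj Q R := Q ≠ R ∧ ((Q : Set V) ∩ (R : Set V)).Nonempty
  symm := ⟨by
    intro Q R h
    refine ⟨h.1.symm, ?_⟩
    rw [Set.inter_comm]
    exact h.2⟩
  loopless := ⟨fun Q h => h.1 rfl⟩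

/-- A graph is complete iff any two distinct vertices are adjacent. -/
def IsCompleteGraph {V : Type u} (G : SimpleGraph V) : Prop :=
  ∀ x y : V, x ≠ y → G.Adj x y

/-- The join `G₁ + G₂` of two graphs on disjoint vertex sets: all edges of `G₁`
and of `G₂`, plus all edges between the two vertex sets. -/
def joinGraph {V₁ : Type u} {V₂ : Type v} (G₁ : SimpleGraph V₁) (G₂ : SimpleGraph V₂) :
    SimpleGraph (V₁ ⊕ V₂) where
  Adj x y :=
    match x, y with
    | Sum.inl a, Sum.inl b => G₁.Adj a b
    | Sum.inr a, Sum.inr b => G₂.Adj a b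
    | Sum.inl _, Sum.inr _ => True
    | Sum.inr _, Sum.inl _ => True
  symm := ⟨by rintro (a | a) (b | b) h <;> first | exact h.symm | trivial⟩
  loopless := ⟨by rintro (a | a) h <;> exact (SimpleGraph.irrefl _) h⟩

open SimpleGraph List

section WalkLemmas
variable {α : Type*} {G : SimpleGraph α}

lemma walk_of_chain : ∀ (l : List α) (x y : α), List.Chain G.Adj x (l ++ [y]) →
    ∃ w : G.Walk x y, w.support = x :: (l ++ [y])
  | [], x, y, h => by
    simp only [List.nil_append, List.Chain, List.isChain_cons_cons] at h
    exact ⟨Walk.cons h.1 Walk.nil, by simp⟩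
  | z :: l, x, y, h => by
    simp only [List.cons_append, List.Chain, List.isChain_cons_cons] at h
    obtain ⟨w, hw⟩ := walk_of_chain l z y h.2
    exact ⟨Walk.cons h.1 w, by simp [hw]⟩

lemma closing_edge_not_mem {x y : α} (w : G.Walk x y) (hnd : w.support.Nodup)
    (hlen : 2 ≤ w.length) : s(y, x) ∉ w.edges := by
  cases w with
  | nil => simp at hlen
  | @cons _ z _ a w' =>
    rw [Walk.support_cons, List.nodup_cons] at hnd
    intro hmem
    rw [Walk.edges_cons, List.mem_cons] at hmem
    rcases hmem with h | h
    · rw [Sym2.eq_iff] at h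
      rcases h with ⟨hyx, hxz⟩ | ⟨hyz, -⟩
      · exact hnd.1 (hxz ▸ w'.start_mem_support)
      · subst hyz
        have : w'.IsPath := Walk.IsPath.mk' hnd.2
        rw [Walk.isPath_iff_eq_nil] at this
        subst this
        simp at hlen
    · exact hnd.1 (w'.snd_mem_support_of_mem_edges h)

lemma hamCycle_of_list [DecidableEq α] (x y : α) (l : List α)
    (hchain : List.Chain G.Adj x (l ++ [y]))
    (hnd : (x :: (l ++ [y])).Nodup)
    (hcov : ∀ a : α, a ∈ x :: (l ++ [y]))
    (hl : l ≠ [])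
    (hadj : G.Adj y x) :
    ∃ (a : α) (p : G.Walk a a), p.IsHamiltonianCycle := by
  obtain ⟨w, hw⟩ := walk_of_chain l x y hchain
  have hpath : w.IsPath := Walk.IsPath.mk' (hw ▸ hnd)
  have hlen : 2 ≤ w.length := by
    have h1 := congrArg List.length hw
    rw [Walk.length_support] at h1
    simp at h1
    have h2 : l.length ≠ 0 := fun h => hl (List.length_eq_zero_iff.mp h)
    omega
  have hne : s(y, x) ∉ w.edges := closing_edge_not_mem w (hw ▸ hnd) hlen
  refine ⟨y, Walk.cons hadj w, ?_⟩
  rw [Walk.isHamiltonianCycle_iff_isCycle_and_support_count_tail_eq_one]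
  constructor
  · exact (Walk.cons_isCycle_iff w hadj).2 ⟨hpath, hne⟩
  · intro a
    rw [Walk.support_cons, List.tail_cons, hw]
    exact List.count_eq_one_of_mem hnd (hcov a)

end WalkLemmas
open List

section Snake
variable {γ δ : Type*}

/-- rook adjacency on a product -/
def Rook (p q : γ × δ) : Prop := p.1 = q.1 ∨ p.2 = q.2

/-- one row of the snake -/
def crow (f : Bool) (x : γ) (ys : List δ) : List (γ × δ) :=
  (if f then ys.reverse else ys).map (fun y => (x, y))

/-- the boustrophedon rows -/
def rows : Bool → List γ → List δ → List (γ × δ)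
  | _, [], _ => []
  | f, x :: xs, ys => crow f x ys ++ rows (!f) xs ys

@[simp] lemma mem_crow {p : γ × δ} {f x ys} : p ∈ crow f x ys ↔ p.1 = x ∧ p.2 ∈ ys := by
  obtain ⟨u, v⟩ := p
  cases f <;> simp [crow, eq_comm, and_comm] <;> aesop

lemma crow_ne_nil {f : Bool} {x : γ} {ys : List δ} (h : ys ≠ []) : crow f x ys ≠ [] := by
  cases f <;> simpa [crow]

lemma crow_nodup {f : Bool} {x : γ} {ys : List δ} (h : ys.Nodup) : (crow f x ys).Nodup := by
  cases f <;>
    exact List.Nodup.map (fun a b hab => by simpa using hab) (by simpa using h)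

lemma crow_length {f : Bool} {x : γ} {ys : List δ} : (crow f x ys).length = ys.length := by
  cases f <;> simp [crow]

lemma crow_chain' {f : Bool} {x : γ} {ys : List δ} : (crow f x ys).Chain' Rook := by
  have : ∀ zs : List δ, ((zs.map fun y => (x, y)).Chain' Rook) := by
    intro zs
    induction zs with
    | nil => simp [List.Chain']
    | cons y zs ih =>
      cases zs with
      | nil => simp [List.Chain']
      | cons y' zs' =>
        simp only [List.map_cons, List.Chain', List.isChain_cons_cons]
        exact ⟨Or.inl rfl, by simpa [List.Chain'] using ih⟩
  cases f <;> exact this _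

lemma crow_head? {f : Bool} {x : γ} {ys : List δ} (h : ys ≠ []) :
    (crow f x ys).head? = some (x, if f then ys.getLast h else ys.head h) := by
  cases f
  · simp [crow, List.head?_map, List.head?_eq_head h]
  · simp [crow, List.head?_map, List.head?_reverse,
      List.getLast?_eq_getLast_of_ne_nil h]

lemma crow_getLast? {f : Bool} {x : γ} {ys : List δ} (h : ys ≠ []) :
    (crow f x ys).getLast? = some (x, if f then ys.head h else ys.getLast h) := by
  cases f
  · show (ys.map fun y => (x, y)).getLast? = _
    rw [List.getLast?_map, List.getLast?_eq_getLast_of_ne_nil h]; rfl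
  · show (ys.reverse.map fun y => (x, y)).getLast? = _
    rw [List.getLast?_map, List.getLast?_reverse, List.head?_eq_head h]; rfl

@[simp] lemma rows_nil_right (f) (xs : List γ) : rows f xs ([] : List δ) = [] := by
  induction xs generalizing f with
  | nil => rfl
  | cons x xs ih => simp [rows, crow, ih]

@[simp] lemma mem_rows {p : γ × δ} : ∀ {f : Bool} {xs : List γ} {ys : List δ},
    p ∈ rows f xs ys ↔ p.1 ∈ xs ∧ p.2 ∈ ys
  | f, [], ys => by simp [rows]
  | f, x :: xs, ys => by
    simp [rows, mem_rows (f := !f) (xs := xs), List.mem_append]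
    aesop

lemma rows_length : ∀ (f : Bool) (xs : List γ) (ys : List δ),
    (rows f xs ys).length = xs.length * ys.length
  | f, [], ys => by simp [rows]
  | f, x :: xs, ys => by
    simp [rows, crow_length, rows_length (!f) xs ys]
    ring

lemma rows_nodup : ∀ (f : Bool) {xs : List γ} {ys : List δ},
    xs.Nodup → ys.Nodup → (rows f xs ys).Nodup
  | f, [], ys, _, _ => by simp [rows]
  | f, x :: xs, ys, hxs, hys => by
    rw [List.nodup_cons] at hxs
    rw [rows, List.nodup_append]
    refine ⟨crow_nodup hys, rows_nodup (!f) hxs.2 hys, ?_⟩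
    intro p hp p' hp' hpp; subst hpp
    rw [mem_crow] at hp
    rw [mem_rows] at hp'
    exact hxs.1 (hp.1 ▸ hp'.1)

lemma rows_head? {f : Bool} {x : γ} {xs : List γ} {ys : List δ} (h : ys ≠ []) :
    (rows f (x :: xs) ys).head? = some (x, if f then ys.getLast h else ys.head h) := by
  rw [rows, List.head?_append_of_ne_nil _ (crow_ne_nil h), crow_head? h]

lemma rows_chain' : ∀ (f : Bool) (xs : List γ) (ys : List δ), (rows f xs ys).Chain' Rook
  | f, [], ys => by simp [rows, List.Chain']
  | f, [x], ys => by
    rw [rows, rows]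
    simpa using crow_chain'
  | f, x :: x' :: xs, ys => by
    rcases eq_or_ne ys [] with rfl | hys
    · simp [List.Chain']
    rw [rows]
    refine List.IsChain.append crow_chain' (rows_chain' (!f) (x' :: xs) ys) ?_
    intro p hp q hq
    rw [crow_getLast? hys, Option.mem_some_iff] at hp
    rw [rows_head? hys, Option.mem_some_iff] at hq
    subst hp; subst hq
    right
    cases f <;> simp

lemma rows_ne_nil {f : Bool} {xs : List γ} {ys : List δ} (hxs : xs ≠ []) (hys : ys ≠ []) :
    rows f xs ys ≠ [] := by
  intro h
  have := rows_length f xs ys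
  rw [h] at this
  simp at this
  rcases this with h' | h'
  · exact hxs h'
  · exact hys h'

lemma rows_getLast_fst : ∀ (f : Bool) {xs : List γ} {ys : List δ} (hxs : xs ≠ [])
    (hys : ys ≠ []) (h : rows f xs ys ≠ []),
    ((rows f xs ys).getLast h).1 = xs.getLast hxs
  | f, [], ys, hxs, _, _ => absurd rfl hxs
  | f, [x], ys, hxs, hys, h => by
    have h2 : rows f [x] ys = crow f x ys := by
      show crow f x ys ++ rows (!f) [] ys = crow f x ys
      show crow f x ys ++ [] = crow f x ys
      exact List.append_nil _
    have hc := crow_getLast? (f := f) (x := x) hys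
    rw [List.getLast?_eq_getLast_of_ne_nil (h2 ▸ h)] at hc
    have := Option.some_injective _ hc
    simp only [h2] at this ⊢
    rw [this]
    simp
  | f, x :: x' :: xs, ys, hxs, hys, h => by
    have hr : rows (!f) (x' :: xs) ys ≠ [] := rows_ne_nil (by simp) hys
    have hEq : rows f (x :: x' :: xs) ys = crow f x ys ++ rows (!f) (x' :: xs) ys := rfl
    have h4 : (rows f (x :: x' :: xs) ys).getLast? = (rows (!f) (x' :: xs) ys).getLast? := by
      rw [hEq]
      exact List.getLast?_append_of_ne_nil _ hr
    rw [List.getLast?_eq_getLast_of_ne_nil h, List.getLast?_eq_getLast_of_ne_nil hr] at h4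
    have h5 := Option.some_injective _ h4
    rw [h5, rows_getLast_fst (!f) (by simp) hys hr]
    simp

lemma chain'_map_const_fst (x : γ) (zs : List δ) : (zs.map fun y => (x, y)).Chain' Rook := by
  induction zs with
  | nil => simp [List.Chain']
  | cons y zs ih =>
    cases zs with
    | nil => simp [List.Chain']
    | cons y' zs' =>
      simp only [List.map_cons, List.Chain', List.isChain_cons_cons]
      exact ⟨Or.inl rfl, by simpa [List.Chain'] using ih⟩

lemma chain'_map_const_snd (y : δ) (zs : List γ) : (zs.map fun x => (x, y)).Chain' Rook := by
  induction zs with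
  | nil => simp [List.Chain']
  | cons x zs ih =>
    cases zs with
    | nil => simp [List.Chain']
    | cons x' zs' =>
      simp only [List.map_cons, List.Chain', List.isChain_cons_cons]
      exact ⟨Or.inr rfl, by simpa [List.Chain'] using ih⟩

lemma snake (a : γ) (as : List γ) (b : δ) (bs : List δ)
    (ha : (a :: as).Nodup) (hb : (b :: bs).Nodup) :
    ∃ L : List (γ × δ), L.Nodup ∧
      (∀ p : γ × δ, p.1 ∈ a :: as → p.2 ∈ b :: bs → p ∈ L) ∧
      L.Chain' Rook ∧
      L.length = (as.length + 1) * (bs.length + 1) ∧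
      ∃ hL : L ≠ [], Rook (L.getLast hL) (L.head hL) := by
  rw [List.nodup_cons] at ha hb
  obtain ⟨ha1, ha2⟩ := ha
  obtain ⟨hb1, hb2⟩ := hb
  set seg1 : List (γ × δ) := (as ++ [a]).map (fun x => (x, b)) with hseg1
  set seg2 : List (γ × δ) := bs.map (fun y => (a, y)) with hseg2
  set seg3 : List (γ × δ) := rows true as.reverse bs with hseg3
  have mem1 : ∀ p : γ × δ, p ∈ seg1 ↔ (p.1 ∈ as ∨ p.1 = a) ∧ p.2 = b := by
    rintro ⟨u, v⟩; simp [hseg1, eq_comm]; aesop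
  have mem2 : ∀ p : γ × δ, p ∈ seg2 ↔ p.1 = a ∧ p.2 ∈ bs := by
    rintro ⟨u, v⟩; simp [hseg2, eq_comm]; aesop
  have mem3 : ∀ p : γ × δ, p ∈ seg3 ↔ p.1 ∈ as ∧ p.2 ∈ bs := by
    intro p; rw [hseg3, mem_rows, List.mem_reverse]
  refine ⟨seg1 ++ (seg2 ++ seg3), ?_, ?_, ?_, ?_, ?_⟩
  · -- Nodup
    rw [List.nodup_append, List.nodup_append]
    refine ⟨?_, ⟨?_, ?_, ?_⟩, ?_⟩
    · exact List.Nodup.map (fun u v huv => by simpa using congrArg Prod.fst huv)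
        (by simp [List.nodup_append, ha2]; intro h hh hha; subst hha; exact ha1 hh)
    · exact List.Nodup.map (fun u v huv => by simpa using congrArg Prod.snd huv) hb2
    · exact rows_nodup true (List.nodup_reverse.mpr ha2) hb2
    · intro p hp p' hp' hpp; subst hpp
      rw [mem2] at hp; rw [mem3] at hp'
      exact ha1 (hp.1 ▸ hp'.1)
    · intro p hp p' hp' hpp; subst hpp
      rw [mem1] at hp
      rw [List.mem_append] at hp'
      rcases hp' with hp' | hp'
      · rw [mem2] at hp'; exact hb1 (hp.2 ▸ hp'.2)
      · rw [mem3] at hp'; exact hb1 (hp.2 ▸ hp'.2)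
  · -- coverage
    rintro ⟨u, v⟩ hu hv
    rw [List.mem_cons] at hu hv
    rw [List.mem_append, List.mem_append]
    rcases hv with rfl | hv
    · refine Or.inl ((mem1 (u, v)).2 ⟨?_, rfl⟩)
      rcases hu with rfl | hu
      · exact Or.inr rfl
      · exact Or.inl hu
    · rcases hu with rfl | hu
      · exact Or.inr (Or.inl ((mem2 (u, v)).2 ⟨rfl, hv⟩))
      · exact Or.inr (Or.inr ((mem3 (u, v)).2 ⟨hu, hv⟩))
  · -- chain
    refine List.IsChain.append ?_ (List.IsChain.append ?_ ?_ ?_) ?_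
    · exact chain'_map_const_snd b _
    · exact chain'_map_const_fst a _
    · exact rows_chain' true as.reverse bs
    · -- junction seg2 -> seg3
      intro p hp q hq
      rcases eq_or_ne bs [] with rfl | hbs
      · simp [hseg2] at hp
      rcases eq_or_ne as [] with rfl | has
      · simp [hseg3, rows] at hq
      obtain ⟨w, ws, hw⟩ := List.exists_cons_of_ne_nil (List.reverse_ne_nil_iff.mpr has)
      rw [hseg2, List.getLast?_map, List.getLast?_eq_getLast_of_ne_nil hbs,
        Option.map_some, Option.mem_some_iff] at hp
      rw [hseg3, hw, rows_head? hbs, Option.mem_some_iff] at hq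
      subst hp; subst hq
      exact Or.inr (by simp)
    · -- junction seg1 -> seg2 ++ seg3
      intro p hp q hq
      rcases eq_or_ne bs [] with rfl | hbs
      · simp [hseg2, hseg3] at hq
      rw [hseg1, List.getLast?_map, List.getLast?_concat, Option.map_some,
        Option.mem_some_iff] at hp
      rw [List.head?_append_of_ne_nil _ (by simp [hseg2, hbs] : seg2 ≠ []), hseg2,
        List.head?_map, List.head?_eq_head hbs, Option.map_some,
        Option.mem_some_iff] at hq
      subst hp; subst hq
      exact Or.inl rfl
  · -- length
    simp [hseg1, hseg2, hseg3, rows_length]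
    ring
  · -- closing
    have hLne : seg1 ++ (seg2 ++ seg3) ≠ [] := by simp [hseg1]
    refine ⟨hLne, ?_⟩
    rcases eq_or_ne as [] with rfl | has
    · -- all fst = a
      have hall : ∀ p ∈ seg1 ++ (seg2 ++ seg3), (p : γ × δ).1 = a := by
        intro p hp
        rw [List.mem_append, List.mem_append] at hp
        rcases hp with hp | hp | hp
        · rw [mem1] at hp; tauto
        · rw [mem2] at hp; tauto
        · rw [mem3] at hp; simp at hp
      exact Or.inl ((hall _ (List.getLast_mem hLne)).trans (hall _ (List.head_mem hLne)).symm)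
    rcases eq_or_ne bs [] with rfl | hbs
    · have hall : ∀ p ∈ seg1 ++ (seg2 ++ seg3), (p : γ × δ).2 = b := by
        intro p hp
        rw [List.mem_append, List.mem_append] at hp
        rcases hp with hp | hp | hp
        · rw [mem1] at hp; tauto
        · rw [mem2] at hp; simp at hp
        · rw [mem3] at hp; simp at hp
      exact Or.inr ((hall _ (List.getLast_mem hLne)).trans (hall _ (List.head_mem hLne)).symm)
    -- main case
    obtain ⟨x, as', rfl⟩ := List.exists_cons_of_ne_nil has
    have h3ne : seg3 ≠ [] := by
      rw [hseg3]
      exact rows_ne_nil (by simp) hbs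
    have h23ne : seg2 ++ seg3 ≠ [] := by simp [h3ne]
    left
    -- getLast fst
    have hgl : ((seg1 ++ (seg2 ++ seg3)).getLast hLne).1 = x := by
      have e1 : (seg1 ++ (seg2 ++ seg3)).getLast? = seg3.getLast? := by
        rw [List.getLast?_append_of_ne_nil _ h23ne, List.getLast?_append_of_ne_nil _ h3ne]
      rw [List.getLast?_eq_getLast_of_ne_nil hLne,
        List.getLast?_eq_getLast_of_ne_nil h3ne] at e1
      rw [Option.some_injective _ e1]
      have h2 := rows_getLast_fst true (xs := (x :: as').reverse) (ys := bs)
        (by simp) hbs h3ne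
      show ((rows true (x :: as').reverse bs).getLast h3ne).1 = x
      rw [h2, List.getLast_reverse _]
      simp
    -- head fst
    have hhd : ((seg1 ++ (seg2 ++ seg3)).head hLne).1 = x := by
      have e1 : (seg1 ++ (seg2 ++ seg3)).head? = seg1.head? := by
        rw [List.head?_append_of_ne_nil _ (by simp [hseg1] : seg1 ≠ [])]
      rw [List.head?_eq_head hLne] at e1
      have e2 : seg1.head? = some (x, b) := by
        rw [hseg1]
        simp
      rw [e2] at e1
      rw [Option.some_injective _ e1]
    rw [hgl, hhd]
end Snake
section JoinCliques
variable {V₁ : Type u} {V₂ : Type u} (G₁ : SimpleGraph V₁) (G₂ : SimpleGraph V₂)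

lemma isClique_join_iff (S : Set (V₁ ⊕ V₂)) :
    (joinGraph G₁ G₂).IsClique S ↔
      G₁.IsClique (Sum.inl ⁻¹' S) ∧ G₂.IsClique (Sum.inr ⁻¹' S) := by
  constructor
  · intro h
    constructor
    · intro x hx y hy hxy
      exact h hx hy (by simpa using hxy)
    · intro x hx y hy hxy
      exact h hx hy (by simpa using hxy)
  · rintro ⟨h1, h2⟩ x hx y hy hxy
    match x, y with
    | Sum.inl a, Sum.inl b => exact h1 hx hy (by simpa using hxy)
    | Sum.inr a, Sum.inr b => exact h2 hx hy (by simpa using hxy)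
    | Sum.inl a, Sum.inr b => trivial
    | Sum.inr a, Sum.inl b => trivial

lemma sum_decomp (S : Set (V₁ ⊕ V₂)) :
    S = Sum.inl '' (Sum.inl ⁻¹' S) ∪ Sum.inr '' (Sum.inr ⁻¹' S) := by
  ext (x | x) <;> simp

lemma pre_l (P : Set V₁) (Q : Set V₂) :
    Sum.inl ⁻¹' (Sum.inl '' P ∪ Sum.inr '' Q) = P := by
  ext x; simp

lemma pre_r (P : Set V₁) (Q : Set V₂) :
    Sum.inr ⁻¹' (Sum.inl '' P ∪ Sum.inr '' Q) = Q := by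
  ext x; simp

lemma isMaxClique_join_iff (S : Set (V₁ ⊕ V₂)) :
    IsMaxClique (joinGraph G₁ G₂) S ↔
      IsMaxClique G₁ (Sum.inl ⁻¹' S) ∧ IsMaxClique G₂ (Sum.inr ⁻¹' S) := by
  constructor
  · rintro ⟨hc, hmax⟩
    rw [isClique_join_iff] at hc
    refine ⟨⟨hc.1, ?_⟩, ⟨hc.2, ?_⟩⟩
    · intro T₁ hT₁ hsub
      have hT : (joinGraph G₁ G₂).IsClique (Sum.inl '' T₁ ∪ Sum.inr '' (Sum.inr ⁻¹' S)) := by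
        rw [isClique_join_iff, pre_l, pre_r]
        exact ⟨hT₁, hc.2⟩
      have hS : S ⊆ Sum.inl '' T₁ ∪ Sum.inr '' (Sum.inr ⁻¹' S) := by
        intro x hx
        match x with
        | Sum.inl a => exact Or.inl ⟨a, hsub hx, rfl⟩
        | Sum.inr b => exact Or.inr ⟨b, hx, rfl⟩
      have := hmax _ hT hS
      calc Sum.inl ⁻¹' S = Sum.inl ⁻¹' (Sum.inl '' T₁ ∪ Sum.inr '' (Sum.inr ⁻¹' S)) := by rw [← this]
        _ = T₁ := pre_l _ _
    · intro T₂ hT₂ hsub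
      have hT : (joinGraph G₁ G₂).IsClique (Sum.inl '' (Sum.inl ⁻¹' S) ∪ Sum.inr '' T₂) := by
        rw [isClique_join_iff, pre_l, pre_r]
        exact ⟨hc.1, hT₂⟩
      have hS : S ⊆ Sum.inl '' (Sum.inl ⁻¹' S) ∪ Sum.inr '' T₂ := by
        intro x hx
        match x with
        | Sum.inl a => exact Or.inl ⟨a, hx, rfl⟩
        | Sum.inr b => exact Or.inr ⟨b, hsub hx, rfl⟩
      have := hmax _ hT hS
      calc Sum.inr ⁻¹' S = Sum.inr ⁻¹' (Sum.inl '' (Sum.inl ⁻¹' S) ∪ Sum.inr '' T₂) := by rw [← this]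
        _ = T₂ := pre_r _ _
  · rintro ⟨⟨hc1, hm1⟩, ⟨hc2, hm2⟩⟩
    refine ⟨(isClique_join_iff G₁ G₂ S).2 ⟨hc1, hc2⟩, ?_⟩
    intro T hT hST
    rw [isClique_join_iff] at hT
    have e1 : Sum.inl ⁻¹' S = Sum.inl ⁻¹' T :=
      hm1 _ hT.1 (Set.preimage_mono hST)
    have e2 : Sum.inr ⁻¹' S = Sum.inr ⁻¹' T :=
      hm2 _ hT.2 (Set.preimage_mono hST)
    rw [sum_decomp S, e1, e2, ← sum_decomp T]

lemma maxClique_nonempty {V : Type u} [Nonempty V] {G : SimpleGraph V} {s : Set V}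
    (h : IsMaxClique G s) : s.Nonempty := by
  rcases Set.eq_empty_or_nonempty s with rfl | hne
  · obtain ⟨v⟩ := (inferInstance : Nonempty V)
    have hv : G.IsClique {v} := by
      intro x hx y hy hxy
      simp at hx hy
      exact absurd (hx.trans hy.symm) hxy
    have := h.2 {v} hv (Set.empty_subset _)
    exact absurd this.symm (Set.singleton_ne_empty v)
  · exact hne

/-- the product structure of max cliques of a join -/
noncomputable def cliqueEquiv :
    ↥(maxCliques (joinGraph G₁ G₂)) ≃ ↥(maxCliques G₁) × ↥(maxCliques G₂) where
  toFun S := (⟨Sum.inl ⁻¹' (S : Set (V₁ ⊕ V₂)), ((isMaxClique_join_iff G₁ G₂ _).1 S.2).1⟩,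
              ⟨Sum.inr ⁻¹' (S : Set (V₁ ⊕ V₂)), ((isMaxClique_join_iff G₁ G₂ _).1 S.2).2⟩)
  invFun PQ := ⟨Sum.inl '' (PQ.1 : Set V₁) ∪ Sum.inr '' (PQ.2 : Set V₂), by
    rw [maxCliques, Set.mem_setOf_eq, isMaxClique_join_iff, pre_l, pre_r]
    exact ⟨PQ.1.2, PQ.2.2⟩⟩
  left_inv S := Subtype.ext (sum_decomp _).symm
  right_inv PQ := by
    ext : 1
    · exact Subtype.ext (pre_l _ _)
    · exact Subtype.ext (pre_r _ _)

lemma adj_of_common [Nonempty V₁] [Nonempty V₂]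
    (S T : ↥(maxCliques (joinGraph G₁ G₂))) (hne : S ≠ T)
    (h : Sum.inl ⁻¹' (S : Set (V₁ ⊕ V₂)) = Sum.inl ⁻¹' (T : Set (V₁ ⊕ V₂)) ∨
         Sum.inr ⁻¹' (S : Set (V₁ ⊕ V₂)) = Sum.inr ⁻¹' (T : Set (V₁ ⊕ V₂))) :
    (cliqueGraph (joinGraph G₁ G₂)).Adj S T := by
  refine ⟨hne, ?_⟩
  rcases h with h | h
  · obtain ⟨a, ha⟩ := maxClique_nonempty ((isMaxClique_join_iff G₁ G₂ _).1 S.2).1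
    have ha' : a ∈ Sum.inl ⁻¹' (T : Set (V₁ ⊕ V₂)) := h ▸ ha
    exact ⟨Sum.inl a, ha, ha'⟩
  · obtain ⟨b, hb⟩ := maxClique_nonempty ((isMaxClique_join_iff G₁ G₂ _).1 S.2).2
    have hb' : b ∈ Sum.inr ⁻¹' (T : Set (V₁ ⊕ V₂)) := h ▸ hb
    exact ⟨Sum.inr b, hb, hb'⟩

end JoinCliques

section Extra
variable {ζ : Type*}

lemma chain'_and {R S : ζ → ζ → Prop} : ∀ {l : List ζ}, l.Chain' R → l.Chain' S →
    l.Chain' (fun a b => R a b ∧ S a b)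
  | [], _, _ => List.isChain_nil
  | [_], _, _ => List.isChain_singleton _
  | x :: y :: l, h1, h2 => by
    simp only [List.Chain', List.isChain_cons_cons] at h1 h2 ⊢
    exact ⟨⟨h1.1, h2.1⟩, chain'_and h1.2 h2.2⟩

lemma getLast_ne_head {l : List ζ} (hnd : l.Nodup) (h2 : 2 ≤ l.length) (h : l ≠ []) :
    l.getLast h ≠ l.head h := by
  cases l with
  | nil => simp at h2
  | cons x t =>
    cases t with
    | nil => simp at h2
    | cons y t' =>
      rw [List.head_cons, List.getLast_cons (by simp : y :: t' ≠ [])]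
      rw [List.nodup_cons] at hnd
      intro hEq
      exact hnd.1 (hEq ▸ List.getLast_mem (l := y :: t') (by simp))

end Extra

open scoped Classical in
/-- If the clique graph of a join `G₁ + G₂` has at least `3` vertices, then it is
Hamiltonian: it contains a cycle passing through every vertex exactly once. -/
theorem cliqueGraph_join_hamiltonian {V₁ V₂ : Type u} [Finite V₁] [Finite V₂]
    [Nonempty V₁] [Nonempty V₂] (G₁ : SimpleGraph V₁) (G₂ : SimpleGraph V₂)
    (h3 : 3 ≤ Nat.card ↥(maxCliques (joinGraph G₁ G₂))) :
    ∃ (a : ↥(maxCliques (joinGraph G₁ G₂)))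
      (p : (cliqueGraph (joinGraph G₁ G₂)).Walk a a), p.IsHamiltonianCycle := by
  haveI : Fintype ↥(maxCliques G₁) := Fintype.ofFinite _
  haveI : Fintype ↥(maxCliques G₂) := Fintype.ofFinite _
  let e := cliqueEquiv G₁ G₂
  have hcard : Nat.card ↥(maxCliques (joinGraph G₁ G₂)) =
      Fintype.card ↥(maxCliques G₁) * Fintype.card ↥(maxCliques G₂) := by
    rw [Nat.card_congr e, Nat.card_prod, Nat.card_eq_fintype_card, Nat.card_eq_fintype_card]
  -- enumerate the cliques of the factors
  obtain ⟨a, as, h1⟩ : ∃ a as, (Finset.univ : Finset ↥(maxCliques G₁)).toList = a :: as := by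
    cases hl : (Finset.univ : Finset ↥(maxCliques G₁)).toList with
    | nil =>
      exfalso
      have := Finset.length_toList (Finset.univ : Finset ↥(maxCliques G₁))
      rw [hl] at this
      simp only [List.length_nil, Finset.card_univ] at this
      rw [hcard, ← this] at h3
      omega
    | cons a as => exact ⟨a, as, rfl⟩
  obtain ⟨b, bs, h2⟩ : ∃ b bs, (Finset.univ : Finset ↥(maxCliques G₂)).toList = b :: bs := by
    cases hl : (Finset.univ : Finset ↥(maxCliques G₂)).toList with
    | nil =>
      exfalso
      have := Finset.length_toList (Finset.univ : Finset ↥(maxCliques G₂))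
      rw [hl] at this
      simp only [List.length_nil, Finset.card_univ] at this
      rw [hcard, ← this] at h3
      omega
    | cons b bs => exact ⟨b, bs, rfl⟩
  have hlen1 : as.length + 1 = Fintype.card ↥(maxCliques G₁) := by
    have := Finset.length_toList (Finset.univ : Finset ↥(maxCliques G₁))
    rw [h1] at this
    simpa [Finset.card_univ] using this
  have hlen2 : bs.length + 1 = Fintype.card ↥(maxCliques G₂) := by
    have := Finset.length_toList (Finset.univ : Finset ↥(maxCliques G₂))
    rw [h2] at this
    simpa [Finset.card_univ] using this
  obtain ⟨L, hLnd, hLcov, hLch, hLlen, hLne, hLclose⟩ :=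
    snake a as b bs (h1 ▸ Finset.nodup_toList _) (h2 ▸ Finset.nodup_toList _)
  have hL3 : 3 ≤ L.length := by
    rw [hLlen, hlen1, hlen2, ← hcard]
    exact h3
  -- the key adjacency fact
  have key : ∀ p q : ↥(maxCliques G₁) × ↥(maxCliques G₂), p ≠ q → Rook p q →
      (cliqueGraph (joinGraph G₁ G₂)).Adj (e.symm p) (e.symm q) := by
    intro p q hne hr
    apply adj_of_common
    · exact fun h => hne (e.symm.injective h)
    · rcases hr with h | h
      · left
        show ((e (e.symm p)).1 : Set V₁) = ((e (e.symm q)).1 : Set V₁)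
        rw [Equiv.apply_symm_apply, Equiv.apply_symm_apply, h]
      · right
        show ((e (e.symm p)).2 : Set V₂) = ((e (e.symm q)).2 : Set V₂)
        rw [Equiv.apply_symm_apply, Equiv.apply_symm_apply, h]
  -- transfer the snake list to the clique graph
  set l : List ↥(maxCliques (joinGraph G₁ G₂)) := L.map e.symm with hldef
  have hlnd : l.Nodup := hLnd.map e.symm.injective
  have hlcov : ∀ S : ↥(maxCliques (joinGraph G₁ G₂)), S ∈ l := by
    intro S
    have : e S ∈ L := by
      apply hLcov
      · rw [← h1]
        exact Finset.mem_toList.2 (Finset.mem_univ _)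
      · rw [← h2]
        exact Finset.mem_toList.2 (Finset.mem_univ _)
    have h5 : e.symm (e S) ∈ l := List.mem_map_of_mem (f := e.symm) this
    rwa [Equiv.symm_apply_apply] at h5
  have hLch2 : L.Chain' (fun p q => p ≠ q ∧ Rook p q) :=
    chain'_and (List.Pairwise.isChain hLnd) hLch
  have hlch : l.Chain' (cliqueGraph (joinGraph G₁ G₂)).Adj := by
    simp only [hldef, List.Chain', List.isChain_map]
    exact List.IsChain.imp (@fun p q hpq => key p q hpq.1 hpq.2) hLch2
  have hlne : l ≠ [] := by
    rw [hldef]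
    simp [hLne]
  have hllen : l.length = L.length := by rw [hldef, List.length_map]
  -- endpoints of l
  have hlast : l.getLast hlne = e.symm (L.getLast hLne) := by
    have h6 : l.getLast? = some (e.symm (L.getLast hLne)) := by
      rw [hldef, List.getLast?_map, List.getLast?_eq_getLast_of_ne_nil hLne, Option.map_some]
    rw [List.getLast?_eq_getLast_of_ne_nil hlne] at h6
    exact Option.some_injective _ h6
  have hhead : l.head hlne = e.symm (L.head hLne) := by
    have h6 : l.head? = some (e.symm (L.head hLne)) := by
      rw [hldef, List.head?_map, List.head?_eq_head hLne, Option.map_some]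
    rw [List.head?_eq_head hlne] at h6
    exact Option.some_injective _ h6
  have hLgh : L.getLast hLne ≠ L.head hLne := getLast_ne_head hLnd (by omega) hLne
  have hclose : (cliqueGraph (joinGraph G₁ G₂)).Adj (l.getLast hlne) (l.head hlne) := by
    rw [hlast, hhead]
    exact key _ _ hLgh hLclose
  -- decompose l and conclude
  obtain ⟨x, t, hxt⟩ := List.exists_cons_of_ne_nil hlne
  have htne : t ≠ [] := by
    intro h
    rw [hxt, h] at hllen
    simp at hllen
    omega
  have htdec : t.dropLast ++ [t.getLast htne] = t := List.dropLast_append_getLast htne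
  have hmidne : t.dropLast ≠ [] := by
    intro h
    have := congrArg List.length htdec
    rw [h] at this
    simp at this
    rw [hxt] at hllen
    simp [← this] at hllen
    omega
  have hheadx : l.head hlne = x := by
    have h7 : l.head? = some x := by rw [hxt]; rfl
    rw [List.head?_eq_head hlne] at h7
    exact Option.some_injective _ h7
  have hlasty : l.getLast hlne = t.getLast htne := by
    have h7 : l.getLast? = some ((x :: t).getLast (by simp)) := by
      rw [hxt, List.getLast?_eq_getLast_of_ne_nil]
    rw [List.getLast?_eq_getLast_of_ne_nil hlne] at h7
    rw [Option.some_injective _ h7, List.getLast_cons htne]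
  refine hamCycle_of_list x (t.getLast htne) t.dropLast ?_ ?_ ?_ hmidne ?_
  · have : l.Chain' (cliqueGraph (joinGraph G₁ G₂)).Adj := hlch
    rw [hxt] at this
    rw [htdec]
    exact this
  · have : l.Nodup := hlnd
    rw [hxt] at this
    rw [htdec]
    exact this
  · intro S
    have := hlcov S
    rw [hxt] at this
    rw [htdec]
    exact this
  · rw [← hheadx, ← hlasty]
    exact hclose
end

section
/- Let G₁ and G₂ be finite clique-Helly simple graphs, each having at least two vertices and no isolated vertices. Then their Cartesian product G₁ □ G₂ is K-convergent. -/
open SimpleGraph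

universe u v

/-- A finite simple graph bundled with its vertex type. -/
structure BGraph : Type (u + 1) where
  V : Type u
  [finV : Finite V]
  graph : SimpleGraph V

attribute [instance] BGraph.finV

/-- Bundle a finite simple graph. -/
def BGraph.of {V : Type u} [Finite V] (G : SimpleGraph V) : BGraph.{u} :=
  { V := V, graph := G }

/-- The bundled clique graph operator `K`; iterated clique graphs are `KB^[n]`. -/
def KB : BGraph.{u} → BGraph.{u} :=
  fun H => { V := ↥(maxCliques H.graph), graph := cliqueGraph H.graph }

/-- A graph is `K`-convergent if its sequence of iterated clique graphs is finite
up to isomorphism, i.e. two of its iterated clique graphs are isomorphic. -/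
def KConvergent (H : BGraph.{u}) : Prop :=
  ∃ m n : ℕ, m < n ∧ Nonempty ((KB^[n] H).graph ≃g (KB^[m] H).graph)

/-- A graph is `K`-periodic if `Kⁿ(G) ≅ G` for some `n > 0`. -/
def KPeriodic (H : BGraph.{u}) : Prop :=
  ∃ n : ℕ, 0 < n ∧ Nonempty ((KB^[n] H).graph ≃g H.graph)

/-- A graph is clique-Helly if every nonempty family of pairwise intersecting cliques
has nonempty total intersection. -/
def CliqueHelly {V : Type u} (G : SimpleGraph V) : Prop :=
  ∀ F : Set (Set V), F.Nonempty → (∀ s ∈ F, s ∈ maxCliques G) →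
    (∀ s ∈ F, ∀ t ∈ F, (s ∩ t).Nonempty) → (⋂ s ∈ F, s).Nonempty

section Aux
variable {V : Type u} (G : SimpleGraph V)

lemma exists_maxClique_superset [Finite V] {s : Set V} (hs : G.IsClique s) :
    ∃ t ∈ maxCliques G, s ⊆ t := by
  have hfin : {t : Set V | G.IsClique t ∧ s ⊆ t}.Finite := Set.toFinite _
  obtain ⟨t, ht, hmax⟩ := Set.Finite.exists_maximalFor id _ hfin ⟨s, hs, subset_rfl⟩
  exact ⟨t, ⟨ht.1, fun t' ht' hsub => subset_antisymm hsub (hmax ⟨ht', ht.2.trans hsub⟩ hsub)⟩, ht.2⟩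

lemma maxClique_nonempty_s17 [Nonempty V] {s : Set V} (hs : s ∈ maxCliques G) : s.Nonempty := by
  rw [Set.nonempty_iff_ne_empty]
  intro h
  obtain ⟨x⟩ := ‹Nonempty V›
  have := hs.2 {x} (G.isClique_singleton x) (by simp [h])
  exact (Set.singleton_nonempty x).ne_empty (h ▸ this).symm

lemma exists_maxClique_mem [Finite V] (v : V) : ∃ t ∈ maxCliques G, v ∈ t := by
  obtain ⟨t, ht, hsub⟩ := exists_maxClique_superset G (G.isClique_singleton v)
  exact ⟨t, ht, hsub rfl⟩

lemma maxClique_two [Finite V] [Nonempty V] (hiso : ∀ v, ∃ u, G.Adj v u) {Q : Set V}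
    (hQ : Q ∈ maxCliques G) : ∃ a ∈ Q, ∃ b ∈ Q, a ≠ b := by
  obtain ⟨a, ha⟩ := maxClique_nonempty_s17 G hQ
  by_contra h
  push_neg at h
  obtain ⟨w, hw⟩ := hiso a
  have hQa : Q = {a} := subset_antisymm (fun x hx => h x hx a ha) (by simpa)
  have hcl : G.IsClique {a, w} := isClique_pair.2 fun _ => hw
  have heq := hQ.2 {a, w} hcl (by rw [hQa]; simp)
  have : w ∈ Q := heq ▸ (by simp)
  exact hw.ne' (h w this a ha)

end Aux

section Box
variable {V₁ : Type u} {V₂ : Type u} {G₁ : SimpleGraph V₁} {G₂ : SimpleGraph V₂}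

lemma clique_prod_left {Q : Set V₁} (hQ : G₁.IsClique Q) (v : V₂) :
    (G₁ □ G₂).IsClique (Q ×ˢ ({v} : Set V₂)) := by
  rintro ⟨a, b⟩ ⟨ha, hb⟩ ⟨a', b'⟩ ⟨ha', hb'⟩ hne
  simp only [Set.mem_singleton_iff] at hb hb'
  have hne' : a ≠ a' := fun h => hne (by simp [h, hb, hb'])
  exact boxProd_adj.2 (Or.inl ⟨hQ ha ha' hne', hb.trans hb'.symm⟩)

lemma clique_prod_right {R : Set V₂} (hR : G₂.IsClique R) (u : V₁) :
    (G₁ □ G₂).IsClique (({u} : Set V₁) ×ˢ R) := by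
  rintro ⟨a, b⟩ ⟨ha, hb⟩ ⟨a', b'⟩ ⟨ha', hb'⟩ hne
  simp only [Set.mem_singleton_iff] at ha ha'
  have hne' : b ≠ b' := fun h => hne (by simp [h, ha, ha'])
  exact boxProd_adj.2 (Or.inr ⟨hR hb hb' hne', ha.trans ha'.symm⟩)

lemma fst_clique {t : Set (V₁ × V₂)} (ht : (G₁ □ G₂).IsClique t) :
    G₁.IsClique (Prod.fst '' t) := by
  rintro a ⟨⟨a₁, b₁⟩, hm, rfl⟩ a' ⟨⟨a₂, b₂⟩, hm', rfl⟩ hne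
  have hne'' : ((a₁, b₁) : V₁ × V₂) ≠ (a₂, b₂) := fun h => hne (congrArg Prod.fst h)
  rcases boxProd_adj.1 (ht hm hm' hne'') with ⟨h, _⟩ | ⟨_, h⟩
  · exact h
  · exact absurd h hne

lemma snd_clique {t : Set (V₁ × V₂)} (ht : (G₁ □ G₂).IsClique t) :
    G₂.IsClique (Prod.snd '' t) := by
  rintro b ⟨⟨a₁, b₁⟩, hm, rfl⟩ b' ⟨⟨a₂, b₂⟩, hm', rfl⟩ hne
  have hne'' : ((a₁, b₁) : V₁ × V₂) ≠ (a₂, b₂) := fun h => hne (congrArg Prod.snd h)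
  rcases boxProd_adj.1 (ht hm hm' hne'') with ⟨_, h⟩ | ⟨h, _⟩
  · exact absurd h hne
  · exact h

lemma max_prod_left {Q : Set V₁} (hQ : Q ∈ maxCliques G₁)
    (h2 : ∃ a ∈ Q, ∃ b ∈ Q, a ≠ b) (v : V₂) :
    Q ×ˢ ({v} : Set V₂) ∈ maxCliques (G₁ □ G₂) := by
  obtain ⟨x, hx, y, hy, hxy⟩ := h2
  refine ⟨clique_prod_left hQ.1 v, fun t ht hsub => ?_⟩
  have hsnd : ∀ p ∈ t, (p : V₁ × V₂).2 = v := by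
    rintro ⟨a, b⟩ hab
    by_contra hbv
    have hax : a = x := by
      have hne : ((a, b) : V₁ × V₂) ≠ (x, v) := fun h => hbv (congrArg Prod.snd h)
      rcases boxProd_adj.1 (ht hab (hsub (Set.mk_mem_prod hx rfl)) hne) with ⟨_, h⟩ | ⟨_, h⟩
      · exact absurd h hbv
      · exact h
    have hay : a = y := by
      have hne : ((a, b) : V₁ × V₂) ≠ (y, v) := fun h => hbv (congrArg Prod.snd h)
      rcases boxProd_adj.1 (ht hab (hsub (Set.mk_mem_prod hy rfl)) hne) with ⟨_, h⟩ | ⟨_, h⟩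
      · exact absurd h hbv
      · exact h
    exact hxy (hax ▸ hay ▸ rfl)
  have hQP : Q ⊆ Prod.fst '' t := fun a ha => ⟨(a, v), hsub (Set.mk_mem_prod ha rfl), rfl⟩
  have hQeq := hQ.2 _ (fst_clique ht) hQP
  apply subset_antisymm hsub
  rintro ⟨a, b⟩ hab
  refine ⟨by rw [hQeq]; exact ⟨(a, b), hab, rfl⟩, hsnd _ hab⟩

lemma max_prod_right {R : Set V₂} (hR : R ∈ maxCliques G₂)
    (h2 : ∃ a ∈ R, ∃ b ∈ R, a ≠ b) (u : V₁) :
    ({u} : Set V₁) ×ˢ R ∈ maxCliques (G₁ □ G₂) := by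
  obtain ⟨x, hx, y, hy, hxy⟩ := h2
  refine ⟨clique_prod_right hR.1 u, fun t ht hsub => ?_⟩
  have hfst : ∀ p ∈ t, (p : V₁ × V₂).1 = u := by
    rintro ⟨a, b⟩ hab
    by_contra hau
    have hbx : b = x := by
      have hne : ((a, b) : V₁ × V₂) ≠ (u, x) := fun h => hau (congrArg Prod.fst h)
      rcases boxProd_adj.1 (ht hab (hsub (Set.mk_mem_prod rfl hx)) hne) with ⟨_, h⟩ | ⟨_, h⟩
      · exact h
      · exact absurd h hau
    have hby : b = y := by
      have hne : ((a, b) : V₁ × V₂) ≠ (u, y) := fun h => hau (congrArg Prod.fst h)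
      rcases boxProd_adj.1 (ht hab (hsub (Set.mk_mem_prod rfl hy)) hne) with ⟨_, h⟩ | ⟨_, h⟩
      · exact h
      · exact absurd h hau
    exact hxy (hbx ▸ hby ▸ rfl)
  have hRP : R ⊆ Prod.snd '' t := fun b hb => ⟨(u, b), hsub (Set.mk_mem_prod rfl hb), rfl⟩
  have hReq := hR.2 _ (snd_clique ht) hRP
  apply subset_antisymm hsub
  rintro ⟨a, b⟩ hab
  refine ⟨hfst _ hab, by rw [hReq]; exact ⟨(a, b), hab, rfl⟩⟩

lemma box_decomp [Nonempty V₁] [Nonempty V₂] {S : Set (V₁ × V₂)}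
    (hS : S ∈ maxCliques (G₁ □ G₂)) :
    (∃ Q ∈ maxCliques G₁, ∃ v : V₂, S = Q ×ˢ ({v} : Set V₂)) ∨
    (∃ u : V₁, ∃ R ∈ maxCliques G₂, S = ({u} : Set V₁) ×ˢ R) := by
  obtain ⟨⟨a, b⟩, hab⟩ := maxClique_nonempty_s17 _ hS
  by_cases hall : ∀ p ∈ S, (p : V₁ × V₂).2 = b
  · left
    have hSeq : S = (Prod.fst '' S) ×ˢ ({b} : Set V₂) := by
      apply subset_antisymm
      · rintro ⟨x, y⟩ hm
        exact Set.mk_mem_prod ⟨(x, y), hm, rfl⟩ (hall _ hm)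
      · rintro ⟨x, y⟩ ⟨⟨⟨x', y'⟩, hm, h1⟩, h2⟩
        simp only [Set.mem_singleton_iff] at h2
        have h3 := hall _ hm
        simp only at h1 h3
        rw [show ((x, y) : V₁ × V₂) = (x', y') from by rw [h1, h2, h3]]
        exact hm
    refine ⟨Prod.fst '' S, ⟨fst_clique hS.1, ?_⟩, b, hSeq⟩
    intro Q' hQ' hsub
    have heq := hS.2 (Q' ×ˢ ({b} : Set V₂)) (clique_prod_left hQ' b)
      (by rw [hSeq]; exact Set.prod_mono hsub subset_rfl)
    apply subset_antisymm hsub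
    intro x hx
    have hmem : ((x, b) : V₁ × V₂) ∈ S := by rw [heq]; exact ⟨hx, rfl⟩
    exact ⟨(x, b), hmem, rfl⟩
  · right
    push_neg at hall
    obtain ⟨⟨a₂, b₂⟩, hm₂, hb₂⟩ := hall
    simp only at hb₂
    have hfst : ∀ p ∈ S, (p : V₁ × V₂).1 = a := by
      have ha₂ : a₂ = a := by
        have hne : ((a₂, b₂) : V₁ × V₂) ≠ (a, b) := fun h => hb₂ (congrArg Prod.snd h)
        rcases boxProd_adj.1 (hS.1 hm₂ hab hne) with ⟨_, h⟩ | ⟨_, h⟩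
        · exact absurd h hb₂
        · exact h
      rintro ⟨x, y⟩ hm
      by_contra hxa
      have h1 : y = b₂ := by
        have hne : ((x, y) : V₁ × V₂) ≠ (a₂, b₂) := fun h =>
          hxa (ha₂ ▸ congrArg Prod.fst h)
        rcases boxProd_adj.1 (hS.1 hm hm₂ hne) with ⟨_, h⟩ | ⟨_, h⟩
        · exact h
        · exact absurd (h.trans ha₂) hxa
      have h2 : y = b := by
        have hne : ((x, y) : V₁ × V₂) ≠ (a, b) := fun h => hxa (congrArg Prod.fst h)
        rcases boxProd_adj.1 (hS.1 hm hab hne) with ⟨_, h⟩ | ⟨_, h⟩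
        · exact h
        · exact absurd h hxa
      exact hb₂ (h1 ▸ h2)
    have hSeq : S = ({a} : Set V₁) ×ˢ (Prod.snd '' S) := by
      apply subset_antisymm
      · rintro ⟨x, y⟩ hm
        exact Set.mk_mem_prod (hfst _ hm) ⟨(x, y), hm, rfl⟩
      · rintro ⟨x, y⟩ ⟨h1, ⟨⟨x', y'⟩, hm, h2⟩⟩
        simp only [Set.mem_singleton_iff] at h1
        have h3 := hfst _ hm
        simp only at h2 h3
        rw [show ((x, y) : V₁ × V₂) = (x', y') from by rw [h1, h2, h3]]
        exact hm
    refine ⟨a, Prod.snd '' S, ⟨snd_clique hS.1, ?_⟩, hSeq⟩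
    intro R' hR' hsub
    have heq := hS.2 (({a} : Set V₁) ×ˢ R') (clique_prod_right hR' a)
      (by rw [hSeq]; exact Set.prod_mono subset_rfl hsub)
    apply subset_antisymm hsub
    intro y hy
    have hmem : ((a, y) : V₁ × V₂) ∈ S := by rw [heq]; exact ⟨rfl, hy⟩
    exact ⟨(a, y), hmem, rfl⟩

end Box

section Star
variable {V₁ : Type u} {V₂ : Type u} {G₁ : SimpleGraph V₁} {G₂ : SimpleGraph V₂}

lemma box_commonPoint [Nonempty V₁] [Nonempty V₂]
    (hH₁ : CliqueHelly G₁) (hH₂ : CliqueHelly G₂)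
    {T : Set (Set (V₁ × V₂))} (hT : T ⊆ maxCliques (G₁ □ G₂)) (hne : T.Nonempty)
    (hint : ∀ S ∈ T, ∀ S' ∈ T, (S ∩ S').Nonempty) : ∃ p : V₁ × V₂, ∀ S ∈ T, p ∈ S := by
  obtain ⟨S₀, hS₀⟩ := hne
  rcases box_decomp (hT hS₀) with ⟨Q₀, hQ₀, v₀, hS₀eq⟩ | ⟨u₀, R₀, hR₀, hS₀eq⟩
  · by_cases hB : ∃ S ∈ T, ∃ u : V₁, ∃ R ∈ maxCliques G₂, S = ({u} : Set V₁) ×ˢ R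
    · obtain ⟨S₁, hS₁, u, R₁, hR₁, hS₁eq⟩ := hB
      refine ⟨(u, v₀), fun S hS => ?_⟩
      rcases box_decomp (hT hS) with ⟨Q, hQ, v, hSeq⟩ | ⟨u', R, hR, hSeq⟩
      · obtain ⟨⟨x, y⟩, hx1, hx2⟩ := hint S hS S₀ hS₀
        rw [hSeq] at hx1; rw [hS₀eq] at hx2
        have hv : v = v₀ := hx1.2.symm.trans hx2.2
        obtain ⟨⟨x', y'⟩, h1, h2⟩ := hint S hS S₁ hS₁
        rw [hSeq] at h1; rw [hS₁eq] at h2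
        have hu : u ∈ Q := h2.1 ▸ h1.1
        rw [hSeq]
        exact ⟨hu, hv.symm⟩
      · obtain ⟨⟨x', y'⟩, h1, h2⟩ := hint S hS S₁ hS₁
        rw [hSeq] at h1; rw [hS₁eq] at h2
        have hu : u' = u := h1.1.symm.trans h2.1
        obtain ⟨⟨x, y⟩, hx1, hx2⟩ := hint S hS S₀ hS₀
        rw [hSeq] at hx1; rw [hS₀eq] at hx2
        have hv : v₀ ∈ R := hx2.2 ▸ hx1.2
        rw [hSeq]
        exact ⟨hu.symm, hv⟩
    · push_neg at hB
      have hform : ∀ S ∈ T, ∃ Q ∈ maxCliques G₁, S = Q ×ˢ ({v₀} : Set V₂) := by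
        intro S hS
        rcases box_decomp (hT hS) with ⟨Q, hQ, v, hSeq⟩ | ⟨u', R, hR, hSeq⟩
        · obtain ⟨⟨x, y⟩, hx1, hx2⟩ := hint S hS S₀ hS₀
          rw [hSeq] at hx1; rw [hS₀eq] at hx2
          have hv : v = v₀ := hx1.2.symm.trans hx2.2
          exact ⟨Q, hQ, hv ▸ hSeq⟩
        · exact absurd hSeq (hB S hS u' R hR)
      set F : Set (Set V₁) := {Q | Q ∈ maxCliques G₁ ∧ Q ×ˢ ({v₀} : Set V₂) ∈ T} with hF
      have hFne : F.Nonempty := by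
        obtain ⟨Q₀', hQ₀', hQeq⟩ := hform S₀ hS₀
        exact ⟨Q₀', hQ₀', hQeq ▸ hS₀⟩
      have hcap : (⋂ s ∈ F, s).Nonempty := by
        refine hH₁ F hFne (fun s hs => hs.1) ?_
        intro Q hQ Q' hQ'
        obtain ⟨⟨x, y⟩, h1, h2⟩ := hint _ hQ.2 _ hQ'.2
        exact ⟨x, h1.1, h2.1⟩
      obtain ⟨uu, huu⟩ := hcap
      rw [Set.mem_iInter₂] at huu
      refine ⟨(uu, v₀), fun S hS => ?_⟩
      obtain ⟨Q, hQ, hQeq⟩ := hform S hS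
      rw [hQeq]
      exact ⟨huu Q ⟨hQ, hQeq ▸ hS⟩, rfl⟩
  · by_cases hB : ∃ S ∈ T, ∃ Q ∈ maxCliques G₁, ∃ v : V₂, S = Q ×ˢ ({v} : Set V₂)
    · obtain ⟨S₁, hS₁, Q₁, hQ₁, v, hS₁eq⟩ := hB
      refine ⟨(u₀, v), fun S hS => ?_⟩
      rcases box_decomp (hT hS) with ⟨Q, hQ, v', hSeq⟩ | ⟨u', R, hR, hSeq⟩
      · obtain ⟨⟨x, y⟩, h1, h2⟩ := hint S hS S₁ hS₁
        rw [hSeq] at h1; rw [hS₁eq] at h2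
        have hv : v' = v := h1.2.symm.trans h2.2
        obtain ⟨⟨x', y'⟩, hx1, hx2⟩ := hint S hS S₀ hS₀
        rw [hSeq] at hx1; rw [hS₀eq] at hx2
        have hu : u₀ ∈ Q := hx2.1 ▸ hx1.1
        rw [hSeq]
        exact ⟨hu, hv.symm⟩
      · obtain ⟨⟨x', y'⟩, h1, h2⟩ := hint S hS S₀ hS₀
        rw [hSeq] at h1; rw [hS₀eq] at h2
        have hu : u' = u₀ := h1.1.symm.trans h2.1
        obtain ⟨⟨x, y⟩, hx1, hx2⟩ := hint S hS S₁ hS₁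
        rw [hSeq] at hx1; rw [hS₁eq] at hx2
        have hv : v ∈ R := hx2.2 ▸ hx1.2
        rw [hSeq]
        exact ⟨hu.symm, hv⟩
    · push_neg at hB
      have hform : ∀ S ∈ T, ∃ R ∈ maxCliques G₂, S = ({u₀} : Set V₁) ×ˢ R := by
        intro S hS
        rcases box_decomp (hT hS) with ⟨Q, hQ, v, hSeq⟩ | ⟨u', R, hR, hSeq⟩
        · exact absurd hSeq (hB S hS Q hQ v)
        · obtain ⟨⟨x, y⟩, hx1, hx2⟩ := hint S hS S₀ hS₀
          rw [hSeq] at hx1; rw [hS₀eq] at hx2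
          have hu : u' = u₀ := hx1.1.symm.trans hx2.1
          exact ⟨R, hR, hu ▸ hSeq⟩
      set F : Set (Set V₂) := {R | R ∈ maxCliques G₂ ∧ ({u₀} : Set V₁) ×ˢ R ∈ T} with hF
      have hFne : F.Nonempty := by
        obtain ⟨R₀', hR₀', hReq⟩ := hform S₀ hS₀
        exact ⟨R₀', hR₀', hReq ▸ hS₀⟩
      have hcap : (⋂ s ∈ F, s).Nonempty := by
        refine hH₂ F hFne (fun s hs => hs.1) ?_
        intro R hR R' hR'
        obtain ⟨⟨x, y⟩, h1, h2⟩ := hint _ hR.2 _ hR'.2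
        exact ⟨y, h1.2, h2.2⟩
      obtain ⟨vv, hvv⟩ := hcap
      rw [Set.mem_iInter₂] at hvv
      refine ⟨(u₀, vv), fun S hS => ?_⟩
      obtain ⟨R, hR, hReq⟩ := hform S hS
      rw [hReq]
      exact ⟨rfl, hvv R ⟨hR, hReq ▸ hS⟩⟩

def starC {V : Type u} (G : SimpleGraph V) (p : V) : Set ↥(maxCliques G) :=
  {S | p ∈ (S : Set V)}

lemma starC_clique {V : Type u} (G : SimpleGraph V) (p : V) :
    (cliqueGraph G).IsClique (starC G p) :=
  fun S hS S' hS' hne => ⟨hne, p, hS, hS'⟩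

variable [Finite V₁] [Finite V₂] [Nonempty V₁] [Nonempty V₂]

lemma starCMax (hiso₁ : ∀ v : V₁, ∃ u : V₁, G₁.Adj v u)
    (hiso₂ : ∀ v : V₂, ∃ u : V₂, G₂.Adj v u) (p : V₁ × V₂) :
    starC (G₁ □ G₂) p ∈ maxCliques (cliqueGraph (G₁ □ G₂)) := by
  refine ⟨starC_clique _ _, fun t ht hsub => subset_antisymm hsub ?_⟩
  intro S hSt
  show p ∈ (S : Set (V₁ × V₂))
  obtain ⟨Q, hQ, hu⟩ := exists_maxClique_mem G₁ p.1
  obtain ⟨R, hR, hv⟩ := exists_maxClique_mem G₂ p.2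
  have hSq : Q ×ˢ ({p.2} : Set V₂) ∈ maxCliques (G₁ □ G₂) :=
    max_prod_left hQ (maxClique_two G₁ hiso₁ hQ) p.2
  have hSr : ({p.1} : Set V₁) ×ˢ R ∈ maxCliques (G₁ □ G₂) :=
    max_prod_right hR (maxClique_two G₂ hiso₂ hR) p.1
  have hq_star : (⟨_, hSq⟩ : ↥(maxCliques (G₁ □ G₂))) ∈ starC (G₁ □ G₂) p := ⟨hu, rfl⟩
  have hr_star : (⟨_, hSr⟩ : ↥(maxCliques (G₁ □ G₂))) ∈ starC (G₁ □ G₂) p := ⟨rfl, hv⟩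
  have key : ((S : Set (V₁ × V₂)) ∩ Q ×ˢ ({p.2} : Set V₂)).Nonempty →
      ((S : Set (V₁ × V₂)) ∩ ({p.1} : Set V₁) ×ˢ R).Nonempty → p ∈ (S : Set (V₁ × V₂)) := by
    intro h1 h2
    rcases box_decomp S.2 with ⟨Q', hQ', v', hS'⟩ | ⟨u', R', hR', hS'⟩
    · obtain ⟨⟨x, y⟩, hxS, hxq⟩ := h1
      rw [hS'] at hxS
      have hv' : v' = p.2 := hxS.2.symm.trans hxq.2
      obtain ⟨⟨x', y'⟩, hxS', hxr⟩ := h2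
      rw [hS'] at hxS'
      have hup : p.1 ∈ Q' := hxr.1 ▸ hxS'.1
      rw [hS']
      exact ⟨hup, hv'.symm⟩
    · obtain ⟨⟨x', y'⟩, hxS', hxr⟩ := h2
      rw [hS'] at hxS'
      have hup : u' = p.1 := hxS'.1.symm.trans hxr.1
      obtain ⟨⟨x, y⟩, hxS, hxq⟩ := h1
      rw [hS'] at hxS
      have hv' : p.2 ∈ R' := hxq.2 ▸ hxS.2
      rw [hS']
      exact ⟨hup.symm, hv'⟩
  by_cases h1 : S = ⟨_, hSq⟩
  · rw [h1]; exact ⟨hu, rfl⟩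
  by_cases h2 : S = ⟨_, hSr⟩
  · rw [h2]; exact ⟨rfl, hv⟩
  exact key (ht hSt (hsub hq_star) h1).2 (ht hSt (hsub hr_star) h2).2

lemma starCInj (hiso₁ : ∀ v : V₁, ∃ u : V₁, G₁.Adj v u)
    (hiso₂ : ∀ v : V₂, ∃ u : V₂, G₂.Adj v u) {p q : V₁ × V₂}
    (h : starC (G₁ □ G₂) p = starC (G₁ □ G₂) q) : p = q := by
  obtain ⟨Q, hQ, hu⟩ := exists_maxClique_mem G₁ p.1
  obtain ⟨R, hR, hv⟩ := exists_maxClique_mem G₂ p.2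
  have hSq : Q ×ˢ ({p.2} : Set V₂) ∈ maxCliques (G₁ □ G₂) :=
    max_prod_left hQ (maxClique_two G₁ hiso₁ hQ) p.2
  have hSr : ({p.1} : Set V₁) ×ˢ R ∈ maxCliques (G₁ □ G₂) :=
    max_prod_right hR (maxClique_two G₂ hiso₂ hR) p.1
  have h1 : (⟨_, hSq⟩ : ↥(maxCliques (G₁ □ G₂))) ∈ starC (G₁ □ G₂) q :=
    h ▸ (⟨hu, rfl⟩ : (⟨_, hSq⟩ : ↥(maxCliques (G₁ □ G₂))) ∈ starC (G₁ □ G₂) p)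
  have h2 : (⟨_, hSr⟩ : ↥(maxCliques (G₁ □ G₂))) ∈ starC (G₁ □ G₂) q :=
    h ▸ (⟨rfl, hv⟩ : (⟨_, hSr⟩ : ↥(maxCliques (G₁ □ G₂))) ∈ starC (G₁ □ G₂) p)
  have hq2 : q.2 = p.2 := h1.2
  have hq1 : q.1 = p.1 := h2.1.symm ▸ rfl
  exact Prod.ext hq1.symm hq2.symm

lemma starCSurj (hH₁ : CliqueHelly G₁) (hH₂ : CliqueHelly G₂)
    {T : Set ↥(maxCliques (G₁ □ G₂))} (hT : T ∈ maxCliques (cliqueGraph (G₁ □ G₂))) :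
    ∃ p : V₁ × V₂, T = starC (G₁ □ G₂) p := by
  have hNEK : Nonempty ↥(maxCliques (G₁ □ G₂)) := by
    obtain ⟨x⟩ := (inferInstance : Nonempty (V₁ × V₂))
    obtain ⟨t, ht, _⟩ := exists_maxClique_mem (G₁ □ G₂) x
    exact ⟨⟨t, ht⟩⟩
  have hTne : T.Nonempty := maxClique_nonempty_s17 _ hT
  have hcp : ∃ p : V₁ × V₂, ∀ S ∈ Subtype.val '' T, p ∈ S := by
    refine box_commonPoint hH₁ hH₂ ?_ (hTne.image _) ?_
    · rintro _ ⟨S, _, rfl⟩; exact S.2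
    · rintro _ ⟨S, hST, rfl⟩ _ ⟨S', hST', rfl⟩
      by_cases heq : S = S'
      · rw [heq, Set.inter_self]
        exact maxClique_nonempty_s17 _ S'.2
      · exact (hT.1 hST hST' heq).2
  obtain ⟨p, hp⟩ := hcp
  have hsub : T ⊆ starC (G₁ □ G₂) p := fun S hS => hp ↑S ⟨S, hS, rfl⟩
  exact ⟨p, hT.2 _ (starC_clique _ _) hsub⟩

end Star

/-- The Cartesian product of two finite clique-Helly graphs, each with at least two
vertices and no isolated vertices, is `K`-convergent. -/
theorem kConvergent_boxProd {V₁ V₂ : Type u} [Finite V₁] [Finite V₂]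
    [Nontrivial V₁] [Nontrivial V₂] (G₁ : SimpleGraph V₁) (G₂ : SimpleGraph V₂)
    (hH₁ : CliqueHelly G₁) (hH₂ : CliqueHelly G₂)
    (hiso₁ : ∀ v : V₁, ∃ u : V₁, G₁.Adj v u) (hiso₂ : ∀ v : V₂, ∃ u : V₂, G₂.Adj v u) :
    KConvergent (BGraph.of (G₁ □ G₂)) := by
  have hmax : ∀ p : V₁ × V₂, starC (G₁ □ G₂) p ∈ maxCliques (cliqueGraph (G₁ □ G₂)) :=
    starCMax hiso₁ hiso₂
  let f : V₁ × V₂ → ↥(maxCliques (cliqueGraph (G₁ □ G₂))) := fun p => ⟨starC (G₁ □ G₂) p, hmax p⟩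
  have hbij : Function.Bijective f := by
    constructor
    · intro p q h
      exact starCInj hiso₁ hiso₂ (congrArg Subtype.val h)
    · intro T
      obtain ⟨p, hp⟩ := starCSurj hH₁ hH₂ T.2
      exact ⟨p, Subtype.ext hp.symm⟩
  have e : (G₁ □ G₂) ≃g cliqueGraph (cliqueGraph (G₁ □ G₂)) :=
    { toEquiv := Equiv.ofBijective f hbij
      map_rel_iff' := by
        intro p q
        show (cliqueGraph (cliqueGraph (G₁ □ G₂))).Adj (f p) (f q) ↔ (G₁ □ G₂).Adj p q
        constructor
        · rintro ⟨hne, S, hSp, hSq⟩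
          have hpq : p ≠ q := fun h => hne (by rw [h])
          exact S.2.1 hSp hSq hpq
        · intro h
          obtain ⟨S, hSm, hsub⟩ := exists_maxClique_superset (G₁ □ G₂)
            (isClique_pair.2 fun _ => h)
          exact ⟨fun hh => h.ne (hbij.1 hh), ⟨S, hSm⟩,
            hsub (Set.mem_insert p _), hsub (Set.mem_insert_of_mem p rfl)⟩ }
  exact ⟨0, 2, by norm_num, ⟨e.symm⟩⟩
end
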